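/- Let N ≥ 1 be a natural number, let h, h̃ : Fin N → ℝ be two functions that are each not identically zero, and let δ ≥ 0 be such that |h(x) − h̃(x)| ≤ δ for every x. Then (∑_x h(x)·h̃(x))² ≥ (1 − N·δ² / min(∑_x h(x)², ∑_x h̃(x)²)) · (∑_x h(x)²) · (∑_x h̃(x)²). Equivalently, the fidelity |⟨Ψ_h|Ψ_{h̃}⟩|² between the normalized vectors Ψ_h := h/‖h‖₂ and Ψ_{h̃} := h̃/‖h̃‖₂ is at least 1 − N·δ² / min(‖h‖₂², ‖h̃‖₂²). -/

import Mathlib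

open Finset

/-- **Fidelity lower bound from pointwise amplitude error.**
If `|h x - h̃ x| ≤ δ` for all `x`, then
`(∑ h h̃)² ≥ (1 - Nδ²/min(‖h‖₂², ‖h̃‖₂²)) ‖h‖₂² ‖h̃‖₂²`; equivalently, the fidelity
of the normalized states is at least `1 - Nδ²/min(‖h‖₂², ‖h̃‖₂²)`. -/
theorem fidelity_lower_bound (N : ℕ) (hN : 1 ≤ N)
    (h ht : Fin N → ℝ) (hh : h ≠ 0) (hht : ht ≠ 0)
    (δ : ℝ) (hδ : 0 ≤ δ) (hclose : ∀ x, |h x - ht x| ≤ δ) :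
    (∑ x, h x * ht x) ^ 2
      ≥ (1 - N * δ ^ 2 / min (∑ x, h x ^ 2) (∑ x, ht x ^ 2))
          * (∑ x, h x ^ 2) * (∑ x, ht x ^ 2) := by
  set A := ∑ x, h x ^ 2 with hA
  set B := ∑ x, ht x ^ 2 with hB
  set C := ∑ x, h x * ht x with hC
  set E := ∑ x, (h x - ht x) ^ 2 with hE
  set S := ∑ x, h x * (h x - ht x) with hS
  obtain ⟨x₀, hx₀⟩ : ∃ x, h x ≠ 0 := Function.ne_iff.mp hh
  obtain ⟨y₀, hy₀⟩ : ∃ x, ht x ≠ 0 := Function.ne_iff.mp hht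
  have hApos : 0 < A :=
    Finset.sum_pos' (fun i _ => sq_nonneg _) ⟨x₀, mem_univ x₀, by positivity⟩
  have hBpos : 0 < B :=
    Finset.sum_pos' (fun i _ => sq_nonneg _) ⟨y₀, mem_univ y₀, by positivity⟩
  -- identity: A*B - C^2 = A*E - S^2
  have hid : A * B - C ^ 2 = A * E - S ^ 2 := by
    have h1 : B = A - 2 * S + E := by
      rw [hA, hB, hE, hS, Finset.mul_sum, ← Finset.sum_sub_distrib,
        ← Finset.sum_add_distrib]
      exact Finset.sum_congr rfl fun i _ => by ring
    have h2 : C = A - S := by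
      rw [hA, hC, hS, ← Finset.sum_sub_distrib]
      exact Finset.sum_congr rfl fun i _ => by ring
    rw [h1, h2]; ring
  -- Cauchy–Schwarz: S^2 ≤ A * E
  have hcs : S ^ 2 ≤ A * E := by
    have := Finset.sum_mul_sq_le_sq_mul_sq Finset.univ h (fun x => h x - ht x)
    simpa [hS, hA, hE, mul_pow] using this
  -- E ≤ N * δ^2
  have hElt : E ≤ N * δ ^ 2 := by
    calc E ≤ ∑ _x : Fin N, δ ^ 2 := by
          apply Finset.sum_le_sum
          intro i _
          have := hclose i
          calc (h i - ht i) ^ 2 = |h i - ht i| ^ 2 := (sq_abs _).symm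
            _ ≤ δ ^ 2 := pow_le_pow_left₀ (abs_nonneg _) this 2
      _ = N * δ ^ 2 := by simp [Finset.sum_const]
  -- key: A*B - C^2 ≤ A*E ≤ max A B * (N δ^2)
  have hkey : A * B - C ^ 2 ≤ max A B * (N * δ ^ 2) := by
    rw [hid]
    have h1 : A * E - S ^ 2 ≤ A * E := by nlinarith [sq_nonneg S]
    have h2 : A * E ≤ A * (N * δ ^ 2) :=
      mul_le_mul_of_nonneg_left hElt hApos.le
    have h3 : A * (N * δ ^ 2) ≤ max A B * (N * δ ^ 2) := by
      apply mul_le_mul_of_nonneg_right (le_max_left A B)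
      positivity
    linarith
  -- RHS equals A*B - Nδ² * max A B
  have hmin : 0 < min A B := lt_min hApos hBpos
  have hdiv : A * B / min A B = max A B := by
    rcases le_total A B with hle | hle
    · rw [min_eq_left hle, max_eq_right hle, mul_comm,
        mul_div_assoc, div_self hApos.ne', mul_one]
    · rw [min_eq_right hle, max_eq_left hle,
        mul_div_assoc, div_self hBpos.ne', mul_one]
  have : (1 - N * δ ^ 2 / min A B) * A * B
      = A * B - (N * δ ^ 2) * (A * B / min A B) := by
    field_simp
  rw [ge_iff_le, this, hdiv]
  nlinarith [hkey]
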